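/- A spanning tree T on n vertices admits exactly (n-1) + C(n-1, 2) = C(n, 2) distinct nonempty edge sets of the form Δ_T(X) with |Δ_T(X)| ≤ 2, as X ranges over nontrivial subsets of V. More precisely, the map sending f ∈ E(T) ∪ E(T)^(2) to the unique cut shore (not containing a fixed root r) with Δ_T(shore(f)) = f is a bijection between E(T) ∪ E(T)^(2) and the set of nontrivial subsets X ⊆ V, r ∉ X, with 1 ≤ |Δ_T(X)| ≤ 2. -/

import Mathlib

/-- `Δ_T(X)`: the set of edges of the graph `T` with exactly one endpoint in `X`. -/
def cutEdges {V : Type*} (T : SimpleGraph V) (X : Set V) : Set (Sym2 V) :=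
  {e | e ∈ T.edgeSet ∧ ∃ a b, e = s(a, b) ∧ a ∈ X ∧ b ∉ X}

lemma cutEdges_adj_iff {V : Type*} {T : SimpleGraph V} {X : Set V} {a b : V}
    (hab : T.Adj a b) :
    s(a, b) ∈ cutEdges T X ↔ ((a ∈ X ∧ b ∉ X) ∨ (b ∈ X ∧ a ∉ X)) := by
  constructor
  · rintro ⟨-, c, d, hcd, hc, hd⟩
    rw [Sym2.eq_iff] at hcd
    rcases hcd with ⟨rfl, rfl⟩ | ⟨rfl, rfl⟩
    · exact Or.inl ⟨hc, hd⟩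
    · exact Or.inr ⟨hc, hd⟩
  · rintro (⟨h1, h2⟩ | ⟨h1, h2⟩)
    · exact ⟨hab, a, b, rfl, h1, h2⟩
    · exact ⟨hab, b, a, Sym2.eq_swap.symm, h1, h2⟩

open Classical in
noncomputable def cutCnt {V : Type*} {T : SimpleGraph V} (F : Set (Sym2 V)) {u v : V}
    (w : T.Walk u v) : ℕ :=
  w.edges.countP (fun e => decide (e ∈ F))

open Classical in
lemma even_cutCnt_iff {V : Type*} {T : SimpleGraph V} (X : Set V) :
    ∀ {u v : V} (w : T.Walk u v),
      ((u ∈ X) ↔ (v ∈ X)) ↔ Even (cutCnt (cutEdges T X) w) := by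
  intro u v w
  induction w with
  | nil => simp [cutCnt]
  | @cons u u' v h q ih =>
    simp only [cutCnt, SimpleGraph.Walk.edges_cons, List.countP_cons, decide_eq_true_eq] at *
    by_cases hm : s(u, u') ∈ cutEdges T X
    · rw [if_pos hm, Nat.even_add_one]
      have hx := (cutEdges_adj_iff h).1 hm
      tauto
    · rw [if_neg hm, add_zero, ← ih]
      have hx : (u ∈ X) ↔ (u' ∈ X) := by
        by_contra hcon
        exact hm ((cutEdges_adj_iff h).2 (by tauto))
      rw [hx]

open Classical in
lemma cutCnt_concat {V : Type*} {T : SimpleGraph V} (F : Set (Sym2 V)) {x y z : V}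
    (w : T.Walk x y) (h : T.Adj y z) :
    cutCnt F (w.concat h) = cutCnt F w + (if s(y, z) ∈ F then 1 else 0) := by
  simp only [cutCnt, SimpleGraph.Walk.edges_concat, List.concat_eq_append,
    List.countP_append, List.countP_cons, List.countP_nil, decide_eq_true_eq, zero_add]

open SimpleGraph in
lemma tree_path_step {V : Type*} [DecidableEq V] {T : SimpleGraph V} (hT : T.IsAcyclic)
    {r a b : V} (pa : T.Walk r a) (pb : T.Walk r b) (hpa : pa.IsPath)
    (hab : T.Adj a b) (hu : ∀ (y : T.Walk r b), y.IsPath → y = pb) :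
    pb = pa.concat hab ∨ pa = pb.concat hab.symm := by
  by_cases hb : b ∈ pa.support
  · right
    have ht : (pa.takeUntil b hb).IsPath := hpa.takeUntil hb
    have hd : (pa.dropUntil b hb).IsPath := hpa.dropUntil hb
    have h1 : pa.takeUntil b hb = pb := hu _ ht
    have h2 : pa.dropUntil b hb = (Path.singleton hab.symm : T.Walk b a) :=
      congrArg Subtype.val (hT.path_unique ⟨_, hd⟩ (Path.singleton hab.symm))
    calc pa = (pa.takeUntil b hb).append (pa.dropUntil b hb) := (pa.take_spec hb).symm
      _ = pb.concat hab.symm := by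
          rw [h1, h2, SimpleGraph.Walk.concat_eq_append]; rfl
  · left
    have h1 : (Walk.cons hab.symm pa.reverse).IsPath :=
      hpa.reverse.cons (by simpa using hb)
    have h2 : (pa.concat hab).IsPath := by
      have := h1.reverse
      simpa [SimpleGraph.Walk.reverse_cons, SimpleGraph.Walk.reverse_reverse,
        SimpleGraph.Walk.concat_eq_append] using this
    exact (hu _ h2).symm

open Classical in
lemma even_adj {V : Type*} [DecidableEq V] {T : SimpleGraph V} {r : V} {p : ∀ v, T.Walk r v}
    (hT : T.IsAcyclic) (hp : ∀ v, (p v).IsPath)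
    (hu : ∀ v (y : T.Walk r v), y.IsPath → y = p v)
    (F : Set (Sym2 V)) {a b : V} (hab : T.Adj a b) :
    ((Even (cutCnt F (p a)) ↔ Even (cutCnt F (p b))) ↔ s(a, b) ∉ F) := by
  rcases tree_path_step hT (p a) (p b) (hp a) hab (hu b) with hcase | hcase
  · rw [hcase, cutCnt_concat]
    by_cases hF : s(a, b) ∈ F
    · simp only [hF, if_pos, Nat.even_add_one]
      tauto
    · simp [hF]
  · rw [hcase, cutCnt_concat]
    have hsw : (s(b, a) ∈ F) ↔ (s(a, b) ∈ F) := by rw [Sym2.eq_swap]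
    by_cases hF : s(a, b) ∈ F
    · rw [if_pos (hsw.2 hF), Nat.even_add_one]
      simp only [hF]
      tauto
    · rw [if_neg (fun h => hF (hsw.1 h))]
      simp [hF]

theorem stmt_5 {V : Type*} [Fintype V] (T : SimpleGraph V) (hT : T.IsTree)
    (r : V) (hn : 2 ≤ Fintype.card V) :
    -- the map `X ↦ Δ_T(X)` is a bijection between the nontrivial shores `X` with `r ∉ X`
    -- and `1 ≤ |Δ_T(X)| ≤ 2`, and the family `E(T) ∪ E(T)^(2)` of nonempty edge sets of
    -- size at most 2 (so `shore` is its inverse bijection)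
    Set.BijOn (fun X : Set V => cutEdges T X)
      {X : Set V | X ≠ ∅ ∧ X ≠ Set.univ ∧ r ∉ X ∧
        1 ≤ (cutEdges T X).ncard ∧ (cutEdges T X).ncard ≤ 2}
      {F : Set (Sym2 V) | F ⊆ T.edgeSet ∧ (F.ncard = 1 ∨ F.ncard = 2)} ∧
    -- and there are exactly `C(n, 2)` such edge sets
    Set.ncard {F : Set (Sym2 V) | F ⊆ T.edgeSet ∧ (F.ncard = 1 ∨ F.ncard = 2)} =
      (Fintype.card V).choose 2 := by
  classical
  choose p hp using fun v => hT.existsUnique_path r v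
  have hIs : ∀ v, (p v).IsPath := fun v => (hp v).1
  have hu : ∀ v (y : T.Walk r v), y.IsPath → y = p v := fun v => (hp v).2
  have hadj := fun F => @even_adj V _ T r p hT.IsAcyclic hIs hu F
  have hpr : p r = SimpleGraph.Walk.nil := (hu r _ SimpleGraph.Walk.IsPath.nil).symm
  have hmem : ∀ (X : Set V), r ∉ X → ∀ v, (v ∈ X ↔ ¬ Even (cutCnt (cutEdges T X) (p v))) := by
    intro X hr v
    have := even_cutCnt_iff X (p v)
    tauto
  constructor
  · refine ⟨?_, ?_, ?_⟩
    · rintro X ⟨-, -, -, h1, h2⟩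
      refine ⟨fun e he => he.1, ?_⟩; show (cutEdges T X).ncard = 1 ∨ (cutEdges T X).ncard = 2; omega
    · rintro X ⟨-, -, hrX, -, -⟩ X' ⟨-, -, hrX', -, -⟩ hEq
      simp only at hEq
      ext v
      rw [hmem X hrX v, hmem X' hrX' v, hEq]
    · rintro F ⟨hFsub, hcard⟩
      set X : Set V := {v | ¬ Even (cutCnt F (p v))} with hXdef
      have hrX : r ∉ X := by simp [hXdef, hpr, cutCnt]
      have hparity : ∀ a b, T.Adj a b → ((a ∈ X ↔ b ∉ X) ↔ s(a, b) ∈ F) := by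
        intro a b hab
        have := hadj F hab
        simp only [hXdef, Set.mem_setOf_eq]
        tauto
      have hCE : cutEdges T X = F := by
        ext e
        induction e using Sym2.ind with
        | _ a b =>
          constructor
          · rintro ⟨he, hmemCE⟩
            have hab : T.Adj a b := T.mem_edgeSet.1 he
            have hx := (cutEdges_adj_iff hab).1 ⟨he, hmemCE⟩
            have h2 := hparity a b hab
            tauto
          · intro hF
            have hab : T.Adj a b := T.mem_edgeSet.1 (hFsub hF)
            have h2 := (hparity a b hab).2 hF
            refine (cutEdges_adj_iff hab).2 ?_
            tauto
      refine ⟨X, ⟨?_, ?_, hrX, ?_, ?_⟩, hCE⟩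
      · intro h0
        have hne : F.Nonempty := by
          rcases hcard with h | h <;> exact Set.nonempty_of_ncard_ne_zero (by omega)
        obtain ⟨e, he⟩ := hne
        revert he
        induction e using Sym2.ind with
        | _ a b =>
          intro he
          have hab : T.Adj a b := T.mem_edgeSet.1 (hFsub he)
          have h2 := (hparity a b hab).2 he
          have ha : a ∉ X := by rw [h0]; simp
          have hb : b ∉ X := by rw [h0]; simp
          tauto
      · intro h0
        exact hrX (h0 ▸ Set.mem_univ r)
      · rw [hCE]; omega
      · rw [hCE]; omega
  · have hfin : T.edgeFinset.card = Fintype.card V - 1 := by have := hT.card_edgeFinset; omega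
    set S := T.edgeFinset with hS
    set A := (S.powersetCard 1 ∪ S.powersetCard 2).image
      (fun t : Finset (Sym2 V) => (↑t : Set (Sym2 V))) with hA
    have hset : {F : Set (Sym2 V) | F ⊆ T.edgeSet ∧ (F.ncard = 1 ∨ F.ncard = 2)} = ↑A := by
      ext F
      simp only [hA, Finset.coe_image, Set.mem_image, Finset.mem_coe, Finset.mem_union,
        Finset.mem_powersetCard, Set.mem_setOf_eq]
      constructor
      · rintro ⟨hsub, hcard⟩
        have hFfin : F.Finite := Set.toFinite F
        refine ⟨hFfin.toFinset, ?_, hFfin.coe_toFinset⟩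
        have hc : hFfin.toFinset.card = F.ncard := (Set.ncard_eq_toFinset_card F hFfin).symm
        have hs : hFfin.toFinset ⊆ S := by
          intro e he'
          rw [Set.Finite.mem_toFinset] at he'
          exact SimpleGraph.mem_edgeFinset.2 (hsub he')
        rcases hcard with h | h
        · exact Or.inl ⟨hs, by omega⟩
        · exact Or.inr ⟨hs, by omega⟩
      · rintro ⟨t, ht, rfl⟩
        have hsub : (↑t : Set (Sym2 V)) ⊆ T.edgeSet := by
          rcases ht with ⟨hts, -⟩ | ⟨hts, -⟩ <;> intro e he <;>
            exact SimpleGraph.mem_edgeFinset.1 (hts he)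
        refine ⟨hsub, ?_⟩
        rw [Set.ncard_coe_finset]
        rcases ht with ⟨-, h⟩ | ⟨-, h⟩ <;> omega
    have hdisj : Disjoint (S.powersetCard 1) (S.powersetCard 2) := by
      rw [Finset.disjoint_left]
      intro t h1 h2
      rw [Finset.mem_powersetCard] at h1 h2
      omega
    rw [hset, Set.ncard_coe_finset, hA,
      Finset.card_image_of_injective _ Finset.coe_injective,
      Finset.card_union_of_disjoint hdisj, Finset.card_powersetCard,
      Finset.card_powersetCard, hfin]
    obtain ⟨m, hm⟩ : ∃ m, Fintype.card V = m + 1 :=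
      ⟨Fintype.card V - 1, by omega⟩
    rw [hm, Nat.succ_sub_one, Nat.choose_succ_succ m 1, Nat.choose_one_right]
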